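/- Define h_RS(q; σ², α) = E[log(2 cosh(λ(q) + √λ(q) Z))] − (1/2)λ(q)(1+q) − (1/(2α)) log(1 + (α/σ²)(1−q)), where λ(q) = (σ² + α(1−q))⁻¹ and Z ~ N(0,1). Then for fixed σ² > 0 and α > 0, the partial derivative of h_RS with respect to q vanishes at q if and only if q = E[tanh²(λ(q) + √λ(q) Z)]. -/

import Mathlib

open MeasureTheory ProbabilityTheory Real Filter
open scoped NNReal ENNReal

noncomputable def stdGaussian : Measure ℝ := gaussianReal 0 1

lemma pdf01 (z : ℝ) : gaussianPDFReal 0 1 z = (Real.sqrt (2*Real.pi))⁻¹ * Real.exp (-(1/2) * z^2) := by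
  simp only [gaussianPDFReal, NNReal.coe_one, mul_one, sub_zero]
  ring_nf

lemma integral_stdGaussian (g : ℝ → ℝ) :
    ∫ z, g z ∂stdGaussian = ∫ z, gaussianPDFReal 0 1 z * g z := by
  rw [_root_.stdGaussian, gaussianReal_of_var_ne_zero 0 one_ne_zero]
  rw [show (gaussianPDF 0 1) = fun x => ((Real.toNNReal (gaussianPDFReal 0 1 x) : ℝ≥0) : ℝ≥0∞) from rfl]
  rw [integral_withDensity_eq_integral_smul ((measurable_gaussianPDFReal 0 1).real_toNNReal)]
  congr 1; funext z
  rw [NNReal.smul_def, Real.coe_toNNReal _ (gaussianPDFReal_nonneg 0 1 z), smul_eq_mul]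

lemma integrable_stdGaussian_iff (g : ℝ → ℝ) :
    Integrable g stdGaussian ↔ Integrable (fun z => gaussianPDFReal 0 1 z * g z) volume := by
  rw [_root_.stdGaussian, gaussianReal_of_var_ne_zero 0 one_ne_zero]
  rw [show (gaussianPDF 0 1) = fun x => ((Real.toNNReal (gaussianPDFReal 0 1 x) : ℝ≥0) : ℝ≥0∞) from rfl]
  rw [integrable_withDensity_iff_integrable_smul ((measurable_gaussianPDFReal 0 1).real_toNNReal)]
  constructor <;> intro h <;> refine h.congr (Filter.Eventually.of_forall fun z => ?_) <;>
    simp only [NNReal.smul_def, smul_eq_mul, Real.coe_toNNReal _ (gaussianPDFReal_nonneg 0 1 z)]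

lemma hasDerivAt_tanh (x : ℝ) : HasDerivAt Real.tanh (1 - Real.tanh x ^ 2) x := by
  have h := (Real.hasDerivAt_sinh x).div (Real.hasDerivAt_cosh x) (Real.cosh_pos x).ne'
  have hfun : (Real.sinh / Real.cosh) = Real.tanh :=
    funext fun y => (Real.tanh_eq_sinh_div_cosh y).symm
  rw [hfun] at h
  refine h.congr_deriv ?_
  have h1 := Real.cosh_sq_sub_sinh_sq x
  have h2 := (Real.cosh_pos x).ne'
  rw [Real.tanh_eq_sinh_div_cosh]
  field_simp

lemma abs_tanh_le_one (x : ℝ) : |Real.tanh x| ≤ 1 := by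
  rw [Real.tanh_eq_sinh_div_cosh, abs_div, abs_of_pos (Real.cosh_pos x)]
  rw [div_le_one (Real.cosh_pos x), abs_le]
  rw [Real.sinh_eq, Real.cosh_eq]
  constructor <;> nlinarith [Real.exp_pos x, Real.exp_pos (-x)]

lemma hasDerivAt_log_two_cosh (y : ℝ) :
    HasDerivAt (fun y => Real.log (2 * Real.cosh y)) (Real.tanh y) y := by
  have hpos : 0 < 2 * Real.cosh y := by positivity
  have h := ((Real.hasDerivAt_cosh y).const_mul 2).log hpos.ne'
  convert h using 1
  rw [Real.tanh_eq_sinh_div_cosh]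
  field_simp

lemma log_two_cosh_nonneg (x : ℝ) : 0 ≤ Real.log (2 * Real.cosh x) := by
  have : (1:ℝ) ≤ 2 * Real.cosh x := by nlinarith [Real.one_le_cosh x]
  exact Real.log_nonneg this

lemma log_two_cosh_le (x : ℝ) : Real.log (2 * Real.cosh x) ≤ |x| + Real.log 2 := by
  have hc : Real.cosh x ≤ Real.exp |x| := by
    rw [Real.cosh_eq]
    have h1 : Real.exp x ≤ Real.exp |x| := Real.exp_le_exp.2 (le_abs_self x)
    have h2 : Real.exp (-x) ≤ Real.exp |x| := Real.exp_le_exp.2 (neg_le_abs x)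
    linarith
  calc Real.log (2 * Real.cosh x) ≤ Real.log (2 * Real.exp |x|) := by
        apply Real.log_le_log (by positivity)
        nlinarith [Real.cosh_pos x]
    _ = |x| + Real.log 2 := by
        rw [Real.log_mul two_ne_zero (Real.exp_pos _).ne', Real.log_exp]; ring

lemma tanh_reflect (x : ℝ) : (1 + Real.tanh x) * Real.exp (-(2*x)) = 1 - Real.tanh x := by
  have hc := (Real.cosh_pos x).ne'
  have h1 : 1 + Real.tanh x = Real.exp x / Real.cosh x := by
    rw [Real.tanh_eq_sinh_div_cosh, ← Real.cosh_add_sinh]; field_simp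
  have h2 : 1 - Real.tanh x = Real.exp (-x) / Real.cosh x := by
    rw [Real.tanh_eq_sinh_div_cosh, ← Real.cosh_sub_sinh]; field_simp
  rw [h1, h2, div_mul_eq_mul_div, ← Real.exp_add]
  ring_nf

lemma hasDerivAt_affine (c b z : ℝ) : HasDerivAt (fun z : ℝ => c + b * z) b z := by
  simpa using ((hasDerivAt_id z).const_mul b).const_add c

lemma continuous_pdf01 : Continuous (gaussianPDFReal 0 1) := by
  have : gaussianPDFReal 0 1 = fun z => (Real.sqrt (2*Real.pi))⁻¹ * Real.exp (-(1/2) * z^2) :=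
    funext pdf01
  rw [this]
  exact continuous_const.mul (Real.continuous_exp.comp (continuous_const.mul (continuous_pow 2)))

lemma continuous_tanh_affine (c b : ℝ) : Continuous (fun z => Real.tanh (c + b * z)) := by
  rw [continuous_iff_continuousAt]
  exact fun z => ((hasDerivAt_tanh (c + b*z)).comp (h := fun z => c + b * z) z (hasDerivAt_affine c b z)).continuousAt

lemma hasDerivAt_pdf01 (z : ℝ) :
    HasDerivAt (gaussianPDFReal 0 1) (-z * gaussianPDFReal 0 1 z) z := by
  have hfun : gaussianPDFReal 0 1 = fun z => (Real.sqrt (2*Real.pi))⁻¹ * Real.exp (-(1/2) * z^2) :=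
    funext pdf01
  rw [hfun]
  have hin : HasDerivAt (fun z : ℝ => -(1/2) * z^2) (-z) z := by
    have := (hasDerivAt_pow 2 z).const_mul (-(1/2) : ℝ)
    refine this.congr_deriv ?_
    simp
  have := (hin.exp).const_mul ((Real.sqrt (2*Real.pi))⁻¹)
  refine this.congr_deriv ?_
  ring

lemma Iphi : Integrable (gaussianPDFReal 0 1) volume := integrable_gaussianPDFReal 0 1

lemma Iabsphi : Integrable (fun z => |z| * gaussianPDFReal 0 1 z) volume := by
  have h := (integrable_mul_exp_neg_mul_sq (by norm_num : (0:ℝ) < 1/2)).abs.const_mul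
    ((Real.sqrt (2*Real.pi))⁻¹)
  refine h.congr (Filter.Eventually.of_forall fun z => ?_)
  simp only []
  rw [pdf01, abs_mul, abs_of_pos (Real.exp_pos _)]
  rw [show -(1/2 : ℝ) * z^2 = -(1/2 * z^2) by ring]
  ring

lemma tanh_sq_le_one (x : ℝ) : Real.tanh x ^ 2 ≤ 1 := by
  nlinarith [abs_tanh_le_one x, sq_abs (Real.tanh x), abs_nonneg (Real.tanh x)]

lemma gauss_ibp (c b : ℝ) (hb : 0 < b) :
    ∫ z, gaussianPDFReal 0 1 z * (z * Real.tanh (c + b * z)) =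
      b * ∫ z, gaussianPDFReal 0 1 z * (1 - Real.tanh (c + b * z) ^ 2) := by
  have hu : ∀ z : ℝ, HasDerivAt (fun z => Real.tanh (c + b * z))
      ((1 - Real.tanh (c + b * z) ^ 2) * b) z :=
    fun z => (hasDerivAt_tanh (c + b * z)).comp (h := fun z => c + b * z) z (hasDerivAt_affine c b z)
  have hv : ∀ z : ℝ, HasDerivAt (gaussianPDFReal 0 1) (-z * gaussianPDFReal 0 1 z) z :=
    hasDerivAt_pdf01
  have Ct := continuous_tanh_affine c b
  have Cφ := continuous_pdf01
  have huv' : Integrable ((fun z => Real.tanh (c + b * z)) * fun z => -z * gaussianPDFReal 0 1 z)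
      volume := by
    refine Integrable.mono' Iabsphi
      ((Ct.mul ((continuous_id'.neg).mul Cφ)).aestronglyMeasurable)
      (Filter.Eventually.of_forall fun z => ?_)
    simp only [Pi.mul_apply, Real.norm_eq_abs]
    rw [abs_mul, abs_mul, abs_neg, abs_of_nonneg (gaussianPDFReal_nonneg 0 1 z)]
    have h1 := abs_tanh_le_one (c + b * z)
    nlinarith [mul_nonneg (sub_nonneg.2 h1)
      (mul_nonneg (abs_nonneg z) (gaussianPDFReal_nonneg 0 1 z)),
      abs_nonneg (Real.tanh (c + b*z))]
  have hu'v : Integrable ((fun z => (1 - Real.tanh (c + b * z) ^ 2) * b)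
      * gaussianPDFReal 0 1) volume := by
    refine Integrable.mono' (Iphi.const_mul b)
      ((((continuous_const.sub ((Ct.pow 2))).mul continuous_const).mul Cφ).aestronglyMeasurable)
      (Filter.Eventually.of_forall fun z => ?_)
    simp only [Pi.mul_apply, Real.norm_eq_abs, abs_mul]
    have h1 : 0 ≤ 1 - Real.tanh (c + b*z) ^ 2 := by linarith [tanh_sq_le_one (c + b*z)]
    have h2 : 1 - Real.tanh (c + b*z) ^ 2 ≤ 1 := by
      nlinarith [sq_nonneg (Real.tanh (c + b*z))]
    rw [abs_of_nonneg h1, abs_of_pos hb, abs_of_nonneg (gaussianPDFReal_nonneg 0 1 z)]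
    nlinarith [mul_nonneg (mul_nonneg (sq_nonneg (Real.tanh (c+b*z))) hb.le)
      (gaussianPDFReal_nonneg 0 1 z)]
  have huv : Integrable ((fun z => Real.tanh (c + b * z)) * gaussianPDFReal 0 1) volume := by
    refine Integrable.mono' Iphi ((Ct.mul Cφ).aestronglyMeasurable)
      (Filter.Eventually.of_forall fun z => ?_)
    simp only [Pi.mul_apply, Real.norm_eq_abs, abs_mul]
    rw [abs_of_nonneg (gaussianPDFReal_nonneg 0 1 z)]
    nlinarith [abs_tanh_le_one (c + b*z), gaussianPDFReal_nonneg 0 1 z, abs_nonneg (Real.tanh (c+b*z))]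
  have h := integral_mul_deriv_eq_deriv_mul_of_integrable (fun z _ => hu z) (fun z _ => hv z) huv' hu'v huv
  have e1 : ∫ z, Real.tanh (c + b*z) * (-z * gaussianPDFReal 0 1 z)
      = -∫ z, gaussianPDFReal 0 1 z * (z * Real.tanh (c + b*z)) := by
    rw [← integral_neg]
    congr 1; funext z; ring
  have e2 : ∫ z, ((1 - Real.tanh (c + b*z) ^ 2) * b) * gaussianPDFReal 0 1 z
      = b * ∫ z, gaussianPDFReal 0 1 z * (1 - Real.tanh (c + b*z) ^ 2) := by
    rw [← smul_eq_mul, ← integral_smul]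
    congr 1; funext z
    simp only [smul_eq_mul]; ring
  rw [e1, e2] at h
  linarith

lemma gauss_nishimori (b : ℝ) :
    ∫ z, gaussianPDFReal 0 1 z *
      (Real.tanh (b^2 + b*z) - Real.tanh (b^2 + b*z)^2) = 0 := by
  set f : ℝ → ℝ :=
    fun z => gaussianPDFReal 0 1 z * (Real.tanh (b^2+b*z) - Real.tanh (b^2+b*z)^2) with hf
  have key : ∀ z, f (-z - 2*b) = - f z := by
    intro z
    have hphi : gaussianPDFReal 0 1 (-z - 2*b)
        = gaussianPDFReal 0 1 z * Real.exp (-(2*(b^2 + b*z))) := by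
      rw [pdf01, pdf01, mul_assoc, ← Real.exp_add]
      congr 2
      ring
    have harg : b^2 + b * (-z - 2*b) = -(b^2 + b*z) := by ring
    simp only [hf]
    rw [harg, hphi, Real.tanh_neg]
    have hr := tanh_reflect (b^2 + b*z)
    linear_combination (-(gaussianPDFReal 0 1 z) * Real.tanh (b^2+b*z)) * hr
  have h1 : ∫ z, f (-z - 2*b) = ∫ z, f z := by
    calc ∫ z, f (-z - 2*b) = ∫ z, (fun w => f (w - 2*b)) (-z) := rfl
      _ = ∫ w, f (w - 2*b) := by
          simpa using integral_neg_eq_self (fun w => f (w - 2*b)) volume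
      _ = ∫ z, f z := integral_sub_right_eq_self f (2*b)
  have h2 : ∫ z, f (-z - 2*b) = -∫ z, f z := by
    simp_rw [key]
    exact integral_neg f
  have : ∫ z, f z = 0 := by linarith [h1.symm.trans h2]
  exact this


/-- `λ(q) = (σ² + α(1−q))⁻¹`. -/
noncomputable def lamOf (s α q : ℝ) : ℝ := (s + α * (1 - q))⁻¹

/-- Tanaka's replica free-entropy functional
`h_RS(q;σ²,α) = E[log 2cosh(λ(q)+√λ(q)Z)] − ½λ(q)(1+q) − (1/2α)log(1+(α/σ²)(1−q))`. -/
noncomputable def hRS (s α q : ℝ) : ℝ :=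
  (∫ z, Real.log (2 * Real.cosh (lamOf s α q + Real.sqrt (lamOf s α q) * z)) ∂stdGaussian)
    - (1 / 2) * lamOf s α q * (1 + q) - (1 / (2 * α)) * Real.log (1 + α / s * (1 - q))

lemma hasDerivAt_lamOf (s α : ℝ) (q' : ℝ) (h : 0 < s + α * (1 - q')) :
    HasDerivAt (fun t => lamOf s α t) (α * (lamOf s α q') ^ 2) q' := by
  have hd : HasDerivAt (fun t : ℝ => s + α * (1 - t)) (-α) q' := by
    simpa using (((hasDerivAt_id q').const_sub 1).const_mul α).const_add s
  have h2 := hd.inv h.ne'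
  refine h2.congr_deriv ?_
  unfold lamOf
  rw [div_eq_mul_inv]
  rw [← inv_pow]
  ring

lemma hasDerivAt_sqrt_lamOf (s α : ℝ) (q' : ℝ) (h : 0 < s + α * (1 - q')) :
    HasDerivAt (fun t => Real.sqrt (lamOf s α t))
      (α * (lamOf s α q') ^ 2 / (2 * Real.sqrt (lamOf s α q'))) q' := by
  have h0 : lamOf s α q' ≠ 0 := by unfold lamOf; positivity
  have h2 := (Real.hasDerivAt_sqrt h0).comp q' (hasDerivAt_lamOf s α q' h)
  refine h2.congr_deriv ?_
  field_simp

lemma continuous_log2cosh_affine (a c : ℝ) :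
    Continuous fun z : ℝ => Real.log (2 * Real.cosh (a + c * z)) := by
  apply Continuous.log
  · exact continuous_const.mul
      (Real.continuous_cosh.comp (continuous_const.add (continuous_const.mul continuous_id')))
  · intro z
    positivity

set_option maxHeartbeats 2000000 in
/-- For fixed `σ² > 0`, `α > 0` and `0 ≤ q < 1 + σ²/α`, the derivative of
`q ↦ h_RS(q;σ²,α)` vanishes at `q` iff `q = E[tanh²(λ(q)+√λ(q)Z)]`
(Tanaka's stationarity condition). -/
theorem hRS_stationary_iff (s α : ℝ) (hs : 0 < s) (hα : 0 < α)
    (q : ℝ) (hq0 : 0 ≤ q) (hq1 : q < 1 + s / α) (d : ℝ)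
    (hderiv : HasDerivAt (fun q' => hRS s α q') d q) :
    d = 0 ↔
      q = ∫ z, Real.tanh (lamOf s α q + Real.sqrt (lamOf s α q) * z) ^ 2 ∂stdGaussian := by
  haveI : IsProbabilityMeasure stdGaussian := by unfold _root_.stdGaussian; infer_instance
  -- basic positivity
  have hαs : 0 < s + α * (1 - q) := by
    have h1 : α * q < α * (1 + s / α) := mul_lt_mul_of_pos_left hq1 hα
    have h2 : α * (1 + s / α) = α + s := by field_simp
    nlinarith
  set L : ℝ := lamOf s α q with hLdef
  have hL : 0 < L := by rw [hLdef]; unfold lamOf; positivity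
  set b : ℝ := Real.sqrt L with hbdef
  have hb : 0 < b := Real.sqrt_pos.2 hL
  have hb2 : b ^ 2 = L := Real.sq_sqrt hL.le
  set A : ℝ := α * L ^ 2 with hAdef
  have hA : 0 < A := by positivity
  -- integrabilities over stdGaussian
  have hIabsz : Integrable (fun z => |z|) stdGaussian := by
    rw [integrable_stdGaussian_iff]
    exact Iabsphi.congr (Filter.Eventually.of_forall fun z => mul_comm _ _)
  have Ct : Continuous fun z : ℝ => Real.tanh (L + b * z) := continuous_tanh_affine L b
  have hItanh : Integrable (fun z => Real.tanh (L + b * z)) stdGaussian := by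
    refine Integrable.mono' (integrable_const (1:ℝ)) Ct.aestronglyMeasurable
      (Filter.Eventually.of_forall fun z => ?_)
    simpa [Real.norm_eq_abs] using abs_tanh_le_one (L + b * z)
  have hItanh2 : Integrable (fun z => Real.tanh (L + b * z) ^ 2) stdGaussian := by
    refine Integrable.mono' (integrable_const (1:ℝ)) (Ct.pow 2).aestronglyMeasurable
      (Filter.Eventually.of_forall fun z => ?_)
    have h1 := tanh_sq_le_one (L + b * z)
    have h2 := sq_nonneg (Real.tanh (L + b * z))
    simp only [Real.norm_eq_abs]
    rw [abs_of_nonneg h2]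
    exact h1
  have hIztanh : Integrable (fun z => z * Real.tanh (L + b * z)) stdGaussian := by
    rw [integrable_stdGaussian_iff]
    refine Integrable.mono' Iabsphi
      ((continuous_pdf01.mul (continuous_id'.mul Ct)).aestronglyMeasurable)
      (Filter.Eventually.of_forall fun z => ?_)
    simp only [Real.norm_eq_abs]
    rw [abs_mul, abs_mul, abs_of_nonneg (gaussianPDFReal_nonneg 0 1 z)]
    have h1 := abs_tanh_le_one (L + b * z)
    nlinarith [mul_nonneg (sub_nonneg.2 h1)
      (mul_nonneg (gaussianPDFReal_nonneg 0 1 z) (abs_nonneg z)),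
      abs_nonneg (Real.tanh (L + b * z)), abs_nonneg z, gaussianPDFReal_nonneg 0 1 z]
  -- abbreviations for the three gaussian averages
  set T : ℝ := ∫ z, Real.tanh (L + b * z) ∂stdGaussian with hTdef
  set T2 : ℝ := ∫ z, Real.tanh (L + b * z) ^ 2 ∂stdGaussian with hT2def
  set M : ℝ := ∫ z, z * Real.tanh (L + b * z) ∂stdGaussian with hMdef
  -- Gaussian integration by parts : M = b * (1 - T2)
  have hM : M = b * (1 - T2) := by
    have h1 : M = ∫ z, gaussianPDFReal 0 1 z * (z * Real.tanh (L + b * z)) :=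
      integral_stdGaussian _
    have h2 : ∫ z, (1 - Real.tanh (L + b * z) ^ 2) ∂stdGaussian
        = ∫ z, gaussianPDFReal 0 1 z * (1 - Real.tanh (L + b * z) ^ 2) :=
      integral_stdGaussian _
    have h3 : ∫ z, (1 - Real.tanh (L + b * z) ^ 2) ∂stdGaussian = 1 - T2 := by
      rw [integral_sub (integrable_const 1) hItanh2]
      simp [hT2def]
    rw [h1, gauss_ibp L b hb, ← h2, h3]
  -- Nishimori identity : T = T2
  have hT : T = T2 := by
    have hn := gauss_nishimori b
    rw [hb2] at hn
    have h1 : T - T2 = ∫ z, (Real.tanh (L + b * z) - Real.tanh (L + b * z) ^ 2) ∂stdGaussian :=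
      (integral_sub hItanh hItanh2).symm
    have h2 : ∫ z, (Real.tanh (L + b * z) - Real.tanh (L + b * z) ^ 2) ∂stdGaussian
        = ∫ z, gaussianPDFReal 0 1 z * (Real.tanh (L + b * z) - Real.tanh (L + b * z) ^ 2) :=
      integral_stdGaussian _
    have : T - T2 = 0 := by rw [h1, h2, hn]
    linarith
  -- local bounds for the dominated convergence argument
  set ε : ℝ := (1 + s / α - q) / 2 with hεdef
  have hε : 0 < ε := by rw [hεdef]; linarith
  set Λmax : ℝ := (α * ε)⁻¹ with hΛmax
  set Λmin : ℝ := (s + α * (1 - q + ε))⁻¹ with hΛmin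
  have hΛminpos : 0 < Λmin := by
    rw [hΛmin]
    have : 0 < s + α * (1 - q + ε) := by nlinarith
    positivity
  set C1 : ℝ := α * Λmax ^ 2 with hC1
  set C2 : ℝ := C1 / (2 * Real.sqrt Λmin) with hC2
  have hC1pos : 0 < C1 := by
    have : 0 < Λmax := by rw [hΛmax]; positivity
    rw [hC1]; positivity
  have hC2pos : 0 < C2 := by rw [hC2]; positivity
  have hball : ∀ t ∈ Metric.ball q ε, 0 < s + α * (1 - t) ∧
      α * ε < s + α * (1 - t) ∧ s + α * (1 - t) < s + α * (1 - q + ε) := by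
    intro t ht
    rw [Metric.mem_ball, Real.dist_eq, abs_lt] at ht
    have h1 : α * ε < s + α * (1 - t) := by
      have : t < q + ε := by linarith [ht.2]
      have hεq : 1 + s / α - q = 2 * ε := by rw [hεdef]; ring
      have : α * (1 + s / α - q) = 2 * (α * ε) := by rw [hεq]; ring
      have hfs : α * (1 + s / α) = α + s := by field_simp
      nlinarith
    refine ⟨by nlinarith, h1, by nlinarith [ht.1]⟩
  have hlam_bounds : ∀ t ∈ Metric.ball q ε,
      Λmin < lamOf s α t ∧ lamOf s α t < Λmax := by
    intro t ht
    obtain ⟨hpos, hlow, hhigh⟩ := hball t ht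
    constructor
    · rw [hΛmin]
      unfold lamOf
      exact inv_strictAnti₀ hpos hhigh
    · rw [hΛmax]
      unfold lamOf
      exact inv_strictAnti₀ (by positivity) hlow
  -- the derivative integrand
  set F' : ℝ → ℝ → ℝ := fun t z =>
    Real.tanh (lamOf s α t + Real.sqrt (lamOf s α t) * z) *
      (α * lamOf s α t ^ 2 + α * lamOf s α t ^ 2 / (2 * Real.sqrt (lamOf s α t)) * z)
    with hF'def
  have hint : Integrable
      (fun z => Real.log (2 * Real.cosh (lamOf s α q + Real.sqrt (lamOf s α q) * z)))
      stdGaussian := by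
    rw [← hLdef, ← hbdef]
    refine Integrable.mono'
      ((integrable_const (|L| + Real.log 2)).add (hIabsz.const_mul b))
      (continuous_log2cosh_affine L b).aestronglyMeasurable
      (Filter.Eventually.of_forall fun z => ?_)
    simp only [Real.norm_eq_abs, Pi.add_apply]
    rw [abs_of_nonneg (log_two_cosh_nonneg _)]
    have h1 := log_two_cosh_le (L + b * z)
    have h2 : |L + b * z| ≤ |L| + b * |z| := by
      calc |L + b * z| ≤ |L| + |b * z| := abs_add_le _ _
        _ = |L| + b * |z| := by rw [abs_mul, abs_of_pos hb]
    linarith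
  have hmeas' : AEStronglyMeasurable (F' q) stdGaussian := by
    rw [hF'def]
    exact ((continuous_tanh_affine _ _).mul
      (continuous_const.add (continuous_const.mul continuous_id'))).aestronglyMeasurable
  have hbnd : ∀ᵐ z ∂_root_.stdGaussian, ∀ t ∈ Metric.ball q ε, ‖F' t z‖ ≤ C1 + C2 * |z| := by
    refine Filter.Eventually.of_forall fun z t ht => ?_
    obtain ⟨hmin, hmax⟩ := hlam_bounds t ht
    have hlpos : 0 < lamOf s α t := lt_trans hΛminpos hmin
    have hsq : 0 < Real.sqrt (lamOf s α t) := Real.sqrt_pos.2 hlpos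
    have hΛmaxpos : 0 < Λmax := lt_trans hlpos hmax
    have hA1 : α * lamOf s α t ^ 2 ≤ C1 := by
      rw [hC1]
      have hsq' : lamOf s α t ^ 2 ≤ Λmax ^ 2 := by
        nlinarith [mul_nonneg (sub_nonneg.2 hmax.le) (add_pos hΛmaxpos hlpos).le]
      exact mul_le_mul_of_nonneg_left hsq' hα.le
    have hA0 : 0 < α * lamOf s α t ^ 2 := by positivity
    have hB1 : α * lamOf s α t ^ 2 / (2 * Real.sqrt (lamOf s α t)) ≤ C2 := by
      rw [hC2]
      have hsq2 : Real.sqrt Λmin ≤ Real.sqrt (lamOf s α t) := Real.sqrt_le_sqrt hmin.le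
      have h0 : 0 < Real.sqrt Λmin := Real.sqrt_pos.2 hΛminpos
      exact div_le_div₀ hC1pos.le hA1 (by positivity) (by linarith)
    have hB0 : 0 < α * lamOf s α t ^ 2 / (2 * Real.sqrt (lamOf s α t)) := by positivity
    rw [hF'def]
    simp only [Real.norm_eq_abs]
    rw [abs_mul]
    have h1 := abs_tanh_le_one (lamOf s α t + Real.sqrt (lamOf s α t) * z)
    have h2 : |α * lamOf s α t ^ 2 + α * lamOf s α t ^ 2 / (2 * Real.sqrt (lamOf s α t)) * z|
        ≤ C1 + C2 * |z| := by
      calc |α * lamOf s α t ^ 2 + α * lamOf s α t ^ 2 / (2 * Real.sqrt (lamOf s α t)) * z|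
          ≤ |α * lamOf s α t ^ 2| + |α * lamOf s α t ^ 2 / (2 * Real.sqrt (lamOf s α t)) * z| :=
            abs_add_le _ _
        _ = α * lamOf s α t ^ 2
            + α * lamOf s α t ^ 2 / (2 * Real.sqrt (lamOf s α t)) * |z| := by
            rw [abs_of_pos hA0, abs_mul, abs_of_pos hB0]
        _ ≤ C1 + C2 * |z| := by
            have := mul_le_mul_of_nonneg_right hB1 (abs_nonneg z)
            linarith
    calc |Real.tanh (lamOf s α t + Real.sqrt (lamOf s α t) * z)|
          * |α * lamOf s α t ^ 2 + α * lamOf s α t ^ 2 / (2 * Real.sqrt (lamOf s α t)) * z|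
        ≤ 1 * (C1 + C2 * |z|) := by
          apply mul_le_mul h1 h2 (abs_nonneg _) (by norm_num)
      _ = C1 + C2 * |z| := one_mul _
  have hbint : Integrable (fun z => C1 + C2 * |z|) stdGaussian :=
    (integrable_const C1).add (hIabsz.const_mul C2)
  have hdiff : ∀ᵐ z ∂_root_.stdGaussian, ∀ t ∈ Metric.ball q ε,
      HasDerivAt (fun t => Real.log (2 * Real.cosh (lamOf s α t + Real.sqrt (lamOf s α t) * z)))
        (F' t z) t := by
    refine Filter.Eventually.of_forall fun z t ht => ?_
    obtain ⟨hpos, -, -⟩ := hball t ht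
    have hinner : HasDerivAt (fun u => lamOf s α u + Real.sqrt (lamOf s α u) * z)
        (α * lamOf s α t ^ 2 + α * lamOf s α t ^ 2 / (2 * Real.sqrt (lamOf s α t)) * z) t :=
      (hasDerivAt_lamOf s α t hpos).add ((hasDerivAt_sqrt_lamOf s α t hpos).mul_const z)
    have houter := hasDerivAt_log_two_cosh (lamOf s α t + Real.sqrt (lamOf s α t) * z)
    have hcomp := houter.comp t hinner
    rw [hF'def]
    exact hcomp
  obtain ⟨-, hIderiv⟩ := hasDerivAt_integral_of_dominated_loc_of_deriv_le
    (F := fun t z => Real.log (2 * Real.cosh (lamOf s α t + Real.sqrt (lamOf s α t) * z)))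
    (F' := F') (x₀ := q) (bound := fun z => C1 + C2 * |z|) (μ := stdGaussian) (Metric.ball_mem_nhds q hε)
    (Filter.Eventually.of_forall fun t =>
      (continuous_log2cosh_affine (lamOf s α t) (Real.sqrt (lamOf s α t))).aestronglyMeasurable)
    hint hmeas' hbnd hbint hdiff
  -- derivative of the quadratic term
  have P2 : HasDerivAt (fun t => 1 / 2 * lamOf s α t * (1 + t))
      (1 / 2 * A * (1 + q) + 1 / 2 * L) q := by
    have h := ((hasDerivAt_lamOf s α q hαs).const_mul (1 / 2 : ℝ)).mul
      ((hasDerivAt_id q).const_add 1)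
    refine h.congr_deriv ?_
    simp only [id_eq]
    rw [hAdef, hLdef]
    ring
  -- derivative of the log term
  have P3 : HasDerivAt (fun t => 1 / (2 * α) * Real.log (1 + α / s * (1 - t))) (-(L / 2)) q := by
    have hpos3 : 0 < 1 + α / s * (1 - q) := by
      have h : 1 + α / s * (1 - q) = (s + α * (1 - q)) / s := by field_simp
      rw [h]
      positivity
    have hinner : HasDerivAt (fun t : ℝ => 1 + α / s * (1 - t)) (-(α / s)) q := by
      simpa using (((hasDerivAt_id q).const_sub 1).const_mul (α / s)).const_add 1
    have h := (hinner.log hpos3.ne').const_mul (1 / (2 * α) : ℝ)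
    refine h.congr_deriv ?_
    rw [hLdef]
    unfold lamOf
    rw [div_eq_mul_inv, div_eq_mul_inv]
    field_simp
  -- total derivative
  have htot : HasDerivAt (fun q' => hRS s α q')
      ((∫ z, F' q z ∂stdGaussian) - (1 / 2 * A * (1 + q) + 1 / 2 * L) - (-(L / 2))) q := by
    unfold hRS
    exact (hIderiv.sub P2).sub P3
  have hd : d = (∫ z, F' q z ∂stdGaussian) - (1 / 2 * A * (1 + q) + 1 / 2 * L) - (-(L / 2)) :=
    hderiv.unique htot
  -- split the integral
  have hsplit : ∫ z, F' q z ∂stdGaussian = A * T + A / (2 * b) * M := by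
    have e : (fun z => F' q z) = fun z =>
        A * Real.tanh (L + b * z) + A / (2 * b) * (z * Real.tanh (L + b * z)) := by
      funext z
      rw [hF'def]
      simp only []
      rw [← hLdef, ← hbdef, ← hAdef]
      field_simp
    rw [e, integral_add (hItanh.const_mul A) (hIztanh.const_mul (A / (2 * b))),
      integral_const_mul, integral_const_mul, ← hTdef, ← hMdef]
  have hdval : d = A / 2 * (T2 - q) := by
    rw [hd, hsplit, hM, hT]
    field_simp
    ring
  constructor
  · intro h0
    have h1 : A / 2 * (T2 - q) = 0 := by rw [← hdval]; exact h0
    rcases mul_eq_zero.1 h1 with h | h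
    · exfalso
      have : (0:ℝ) < A / 2 := by positivity
      linarith
    · linarith
  · intro h
    rw [hdval, ← h]
    ring
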